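/- The number of noncommutative crossing partitions of [n] is n!. -/

import Mathlib

/-- A noncommutative crossing partition of `[n] = {1,...,n}`: a sequence of blocks such that
every integer in `[n]` appears exactly once, each block is nonempty and strictly increasing,
and `max(π_i) > min(π_{i+1})` for consecutive blocks. -/
def IsNCCP (n : ℕ) (π : List (List ℕ)) : Prop :=
  π.flatten.Perm (List.range' 1 n) ∧
  (∀ b ∈ π, b ≠ [] ∧ b.Pairwise (· < ·)) ∧
  π.Chain' (fun b b' => ∃ x ∈ b, ∃ y ∈ b', y < x)

/-- Decompose a list into maximal strictly increasing runs. -/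
def runs : List ℕ → List (List ℕ)
  | [] => []
  | a :: l =>
    match runs l with
    | [] => [[a]]
    | [] :: _ => [[a]] -- unreachable
    | (x :: b) :: bs => if a < x then (a :: x :: b) :: bs else [a] :: (x :: b) :: bs

lemma runs_cons_nil (a : ℕ) (l : List ℕ) (h : runs l = []) : runs (a :: l) = [[a]] := by
  simp only [runs, h]

lemma runs_cons_merge (a x : ℕ) (b : List ℕ) (bs : List (List ℕ)) (l : List ℕ)
    (h : runs l = (x :: b) :: bs) (hax : a < x) : runs (a :: l) = (a :: x :: b) :: bs := by
  simp only [runs, h, hax, if_true]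

lemma runs_cons_split (a x : ℕ) (b : List ℕ) (bs : List (List ℕ)) (l : List ℕ)
    (h : runs l = (x :: b) :: bs) (hax : ¬ a < x) :
    runs (a :: l) = [a] :: (x :: b) :: bs := by
  simp only [runs, h, hax, if_false]

lemma nil_not_mem_runs (l : List ℕ) : [] ∉ runs l := by
  induction l with
  | nil => simp [runs]
  | cons a t ih =>
    simp only [runs]
    rcases h : runs t with _ | ⟨_ | ⟨x, b⟩, bs⟩
    · simp
    · simp
    · rw [h] at ih
      by_cases hx : a < x <;> simp [hx] <;> intro hc <;>
        exact ih (by simp [hc])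

lemma flatten_runs (l : List ℕ) : (runs l).flatten = l := by
  induction l with
  | nil => simp [runs]
  | cons a t ih =>
    simp only [runs]
    rcases h : runs t with _ | ⟨c, bs⟩
    · rw [h] at ih; simpa using ih.symm
    · have hc : c ≠ [] := fun hc => nil_not_mem_runs t (hc ▸ h ▸ List.mem_cons_self)
      rcases c with _ | ⟨x, b⟩
      · exact absurd rfl hc
      · rw [h] at ih
        by_cases hx : a < x <;> simp [hx] <;> simpa using ih

lemma sorted_runs (l : List ℕ) : ∀ b ∈ runs l, b.Pairwise (· < ·) := by
  induction l with
  | nil => simp [runs]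
  | cons a t ih =>
    simp only [runs]
    rcases h : runs t with _ | ⟨_ | ⟨x, b⟩, bs⟩
    · simp
    · simp
    · rw [h] at ih
      by_cases hx : a < x
      · simp only [hx, if_true]
        intro c hc
        rcases List.mem_cons.1 hc with rfl | hc
        · have hxb := ih (x :: b) (by simp)
          rw [List.pairwise_cons]
          refine ⟨?_, hxb⟩
          intro y hy
          rcases List.mem_cons.1 hy with rfl | hy
          · exact hx
          · exact hx.trans ((List.pairwise_cons.1 hxb).1 y hy)
        · exact ih c (by simp [hc])
      · simp only [hx, if_false]
        intro c hc
        rcases List.mem_cons.1 hc with rfl | hc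
        · simp
        · exact ih c (by simpa using hc)

lemma head_flatten_runs (t : List ℕ) (x : ℕ) (b : List ℕ) (bs : List (List ℕ))
    (h : runs t = (x :: b) :: bs) : t.head? = some x := by
  have := flatten_runs t
  rw [h] at this
  rw [← this]; simp

lemma chain_runs (l : List ℕ) (hl : l.Nodup) :
    (runs l).Chain' (fun b b' => ∃ x ∈ b, ∃ y ∈ b', y < x) := by
  induction l with
  | nil => simp [runs, List.Chain']
  | cons a t ih =>
    have hat : a ∉ t := (List.nodup_cons.1 hl).1
    have ht : t.Nodup := (List.nodup_cons.1 hl).2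
    simp only [runs]
    rcases h : runs t with _ | ⟨_ | ⟨x, b⟩, bs⟩
    · simp [List.Chain']
    · simp [List.Chain']
    · have hch := ih ht
      rw [h] at hch
      by_cases hx : a < x
      · simp only [hx, if_true]
        rcases bs with _ | ⟨c, bs'⟩
        · simp [List.Chain']
        · refine List.IsChain.cons_cons ?_ (List.isChain_cons_cons.1 hch).2
          obtain ⟨p, hp, q, hq, hqp⟩ := (List.isChain_cons_cons.1 hch).1
          exact ⟨p, by simp [List.mem_cons] at hp ⊢; tauto, q, hq, hqp⟩
      · simp only [hx, if_false]
        refine List.IsChain.cons_cons ?_ hch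
        have hxa : x ≤ a := Nat.le_of_not_lt hx
        have hxt : x ∈ t := by
          have := flatten_runs t
          rw [h] at this
          rw [← this]; simp
        have : x ≠ a := fun hxa' => hat (hxa' ▸ hxt)
        exact ⟨a, by simp, x, by simp, lt_of_le_of_ne hxa this⟩

lemma mem_le_getLast : ∀ (b : List ℕ), b.Pairwise (· < ·) → ∀ (hb : b ≠ []),
    ∀ x ∈ b, x ≤ b.getLast hb := by
  intro b
  induction b with
  | nil => intro _ hb; exact absurd rfl hb
  | cons a t ih =>
    intro hs hb x hx
    rcases t with _ | ⟨c, t'⟩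
    · simp at hx; simp [hx]
    · rw [List.getLast_cons (by simp : c :: t' ≠ [])]
      rcases List.mem_cons.1 hx with rfl | hx'
      · have h1 : x < c := (List.pairwise_cons.1 hs).1 c (by simp)
        have h2 := ih (List.pairwise_cons.1 hs).2 (by simp) c (List.mem_cons_self)
        exact le_trans h1.le h2
      · exact ih (List.pairwise_cons.1 hs).2 (by simp) x hx'

lemma head_le_mem {b : List ℕ} (hs : b.Pairwise (· < ·)) (hb : b ≠ []) {x : ℕ}
    (hx : x ∈ b) : b.head hb ≤ x := by
  rcases b with _ | ⟨a, t⟩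
  · exact absurd rfl hb
  · rcases List.mem_cons.1 hx with rfl | hx
    · simp
    · exact le_of_lt ((List.pairwise_cons.1 hs).1 x hx)

lemma runs_append (b : List ℕ) (m : List ℕ) (hb : b ≠ []) (hs : b.Pairwise (· < ·))
    (hm : ∀ c, m.head? = some c → c < b.getLast hb) :
    runs (b ++ m) = b :: runs m := by
  induction b with
  | nil => exact absurd rfl hb
  | cons a t ih =>
    rcases t with _ | ⟨d, t'⟩
    · -- b = [a]
      rw [List.singleton_append]
      rcases h : runs m with _ | ⟨c, bs⟩
      · rw [runs_cons_nil a m h]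
      · rcases c with _ | ⟨x, b'⟩
        · have := nil_not_mem_runs m
          rw [h] at this
          simp at this
        · have hx := head_flatten_runs m x b' bs h
          have hlt : x < a := by simpa using hm x hx
          rw [runs_cons_split a x b' bs m h (Nat.not_lt_of_gt hlt)]
    · -- b = a :: d :: t'
      have hst : (d :: t').Pairwise (· < ·) := (List.pairwise_cons.1 hs).2
      have had : a < d := (List.pairwise_cons.1 hs).1 d (by simp)
      have hm' : ∀ c, m.head? = some c → c < (d :: t').getLast (by simp) := by
        intro c hc
        have := hm c hc
        rwa [List.getLast_cons (by simp : d :: t' ≠ [])] at this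
      have ih' := ih (by simp) hst hm'
      have heq : (a :: d :: t') ++ m = a :: ((d :: t') ++ m) := rfl
      rw [heq, runs_cons_merge a d t' (runs m) ((d :: t') ++ m) ih' had]

lemma runs_flatten (π : List (List ℕ))
    (h1 : ∀ b ∈ π, b ≠ [] ∧ b.Pairwise (· < ·))
    (h2 : π.Chain' (fun b b' => ∃ x ∈ b, ∃ y ∈ b', y < x)) :
    runs π.flatten = π := by
  induction π with
  | nil => simp [runs]
  | cons b bs ih =>
    have hb := h1 b (by simp)
    have ih' := ih (fun c hc => h1 c (by simp [hc])) h2.tail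
    rw [List.flatten_cons]
    rw [runs_append b bs.flatten hb.1 hb.2 ?_, ih']
    intro c hc
    rcases bs with _ | ⟨b', bs'⟩
    · simp at hc
    · obtain ⟨p, hp, q, hq, hqp⟩ := (List.isChain_cons_cons.1 h2).1
      have hb' := h1 b' (by simp)
      have hhead : (b' :: bs').flatten.head? = some (b'.head hb'.1) := by
        rcases b' with _ | ⟨y, t⟩
        · exact absurd rfl hb'.1
        · simp
      rw [hhead] at hc
      have hcq : c ≤ q := by
        cases hc; exact head_le_mem hb'.2 hb'.1 hq
      calc c ≤ q := hcq
        _ < p := hqp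
        _ ≤ b.getLast hb.1 := mem_le_getLast b hb.2 hb.1 p hp

/-- The number of noncommutative crossing partitions of `[n]` is `n!`. -/
theorem nccp_card (n : ℕ) :
    {π : List (List ℕ) | IsNCCP n π}.ncard = Nat.factorial n := by
  set S := {π : List (List ℕ) | IsNCCP n π} with hS
  have hinj : Set.InjOn List.flatten S := by
    intro π1 h1 π2 h2 heq
    obtain ⟨_, hb1, hc1⟩ := h1
    obtain ⟨_, hb2, hc2⟩ := h2
    rw [← runs_flatten π1 hb1 hc1, ← runs_flatten π2 hb2 hc2, heq]
  have himg : List.flatten '' S = {w : List ℕ | w.Perm (List.range' 1 n)} := by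
    ext w
    constructor
    · rintro ⟨π, hπ, rfl⟩; exact hπ.1
    · intro hw
      have hnd : w.Nodup := hw.nodup_iff.2 (List.nodup_range' ..)
      refine ⟨runs w, ⟨?_, ?_, ?_⟩, flatten_runs w⟩
      · rw [flatten_runs]; exact hw
      · exact fun b hb => ⟨fun hbn => nil_not_mem_runs w (hbn ▸ hb), sorted_runs w b hb⟩
      · exact chain_runs w hnd
  have key := Set.ncard_image_of_injOn hinj
  rw [himg] at key
  rw [← key]
  have hset : {w : List ℕ | w.Perm (List.range' 1 n)} =
      ((List.range' 1 n).permutations.toFinset : Finset (List ℕ)) := by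
    ext w; simp [List.mem_permutations]
  rw [hset, Set.ncard_coe_finset,
    List.toFinset_card_of_nodup (List.nodup_permutations _ (List.nodup_range' ..)),
    List.length_permutations, List.length_range']
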